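/- Let K be a field, n ≥ 2 an integer, and let q, z_1, …, z_n ∈ K be nonzero elements such that z_1, …, z_{n−1} are pairwise distinct and, for all i, j ∈ {1,…,n}: q²z_i ≠ z_j, z_i + q·z_j ≠ 0, and z_i + q³·z_j ≠ 0. Then for every j ∈ {1,…,n−1} one has ∑_{k=1}^{n−1} μ_k(z_1,…,z_{n−1};z_n) · 1/(1+q^{−3}z_k/z_j) + ∑_{k=1}^{n−1} ν_k(z_1,…,z_{n−1};z_n) · 1/(1−q^{−2}z_k/z_j) = 1/(1+q^{−3}z_n/z_j). -/

import Mathlib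

set_option maxHeartbeats 1600000

open Polynomial in
lemma lagrange_eval_aux' {K : Type*} [Field K] [DecidableEq K] (s : Finset K) (P : K[X])
    (hdeg : P.degree < s.card) (x : K) :
    P.eval x = ∑ y ∈ s, P.eval y * ∏ w ∈ s.erase y, (x - w) / (y - w) := by
  have hinj : Set.InjOn (id : K → K) s := Function.injective_id.injOn
  have h := Lagrange.eq_interpolate (v := id) hinj hdeg
  conv_lhs => rw [h]
  rw [Lagrange.interpolate_apply, Polynomial.eval_finset_sum]
  refine Finset.sum_congr rfl fun y hy => ?_
  rw [Polynomial.eval_mul, Polynomial.eval_C]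
  congr 1
  rw [Lagrange.basis, Polynomial.eval_prod]
  refine Finset.prod_congr rfl fun w hw => ?_
  simp [Lagrange.basisDivisor, div_eq_inv_mul]

lemma image_erase_injOn' {α β : Type*} [DecidableEq α] [DecidableEq β] {f : α → β} {s : Finset α}
    (hf : ∀ a ∈ s, ∀ b ∈ s, f a = f b → a = b) {a : α} (ha : a ∈ s) :
    (s.image f).erase (f a) = (s.erase a).image f := by
  ext b
  simp only [Finset.mem_erase, Finset.mem_image]
  constructor
  · rintro ⟨hb, x, hx, rfl⟩
    exact ⟨x, ⟨fun h => hb (by rw [h]), hx⟩, rfl⟩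
  · rintro ⟨x, ⟨hxa, hx⟩, rfl⟩
    exact ⟨fun h => hxa (hf x hx a ha h), x, hx, rfl⟩


open Finset

/-- The coefficient function `μ_k(z_1,…,z_{n-1};t)` of Khoroshkin–Shapiro. -/
noncomputable def muKS {K : Type*} [Field K] (n : ℕ) (q : K) (z : ℕ → K) (k : ℕ) (t : K) : K :=
  (∏ i ∈ (Icc 1 (n - 1)).erase k, (t - z i) / (z k - z i)) *
    ∏ i ∈ Icc 1 (n - 1),
      ((t + q * z i) * (z k - q ^ 2 * z i) * (z k + q ^ 3 * z i)) /
        ((z k + q * z i) * (t - q ^ 2 * z i) * (t + q ^ 3 * z i))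

/-- The coefficient function `ν_k(z_1,…,z_{n-1};t)` of Khoroshkin–Shapiro. -/
noncomputable def nuKS {K : Type*} [Field K] (n : ℕ) (q : K) (z : ℕ → K) (k : ℕ) (t : K) : K :=
  -q ^ n * (∏ i ∈ (Icc 1 (n - 1)).erase k, (t + q * z i) / (z k - z i)) *
    ∏ i ∈ Icc 1 (n - 1),
      ((t - z i) * (z k + q * z i) * (z k - q ^ 2 * z i)) /
        ((q * z k + z i) * (t - q ^ 2 * z i) * (t + q ^ 3 * z i))

open Polynomial in
/-- Khoroshkin–Shapiro, Proposition 8, second family of columns of the linear system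
`(μ,ν)·M = (V_{q²}, V_{-q³})`. -/
theorem weight_function_munu_second_columns
    (K : Type*) [Field K] (n : ℕ) (hn : 2 ≤ n) (q : K) (z : ℕ → K)
    (hq : q ≠ 0) (hz : ∀ i ∈ Icc 1 n, z i ≠ 0)
    (hdist : ∀ i ∈ Icc 1 (n - 1), ∀ j ∈ Icc 1 (n - 1), i ≠ j → z i ≠ z j)
    (hq2 : ∀ i ∈ Icc 1 n, ∀ j ∈ Icc 1 n, q ^ 2 * z i ≠ z j)
    (hq1 : ∀ i ∈ Icc 1 n, ∀ j ∈ Icc 1 n, z i + q * z j ≠ 0)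
    (hq3 : ∀ i ∈ Icc 1 n, ∀ j ∈ Icc 1 n, z i + q ^ 3 * z j ≠ 0) :
    ∀ j ∈ Icc 1 (n - 1),
      (∑ k ∈ Icc 1 (n - 1), muKS n q z k (z n) * (1 / (1 + (q ^ 3)⁻¹ * z k / z j))) +
      (∑ k ∈ Icc 1 (n - 1), nuKS n q z k (z n) * (1 / (1 - (q ^ 2)⁻¹ * z k / z j)))
      = 1 / (1 + (q ^ 3)⁻¹ * z n / z j) := by
  classical
  obtain ⟨m, rfl⟩ : ∃ m, n = m + 2 := ⟨n - 2, by omega⟩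
  simp only [show m + 2 - 1 = m + 1 from rfl] at hdist ⊢
  intro j hj
  classical
  have hsub : ∀ i ∈ Icc 1 (m + 1), i ∈ Icc 1 (m + 2) := by
    intro i hi; rw [mem_Icc] at *; omega
  have hjn := hsub j hj
  have hz0 : ∀ i ∈ Icc 1 (m+1), z i ≠ 0 := fun i hi => hz i (hsub i hi)
  have hzj : z j ≠ 0 := hz j hjn
  have hzinjOn : ∀ a ∈ Icc 1 (m+1), ∀ b ∈ Icc 1 (m+1), z a = z b → a = b := by
    intro a ha b hb hab
    by_contra h
    exact hdist a ha b hb h hab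
  have hφinjOn : ∀ a ∈ Icc 1 (m+1), ∀ b ∈ Icc 1 (m+1), -q * z a = -q * z b → a = b := by
    intro a ha b hb hab
    exact hzinjOn a ha b hb (mul_left_cancel₀ (neg_ne_zero.mpr hq) hab)
  set x : K := z (m + 2) with hx
  set T : Finset ℕ := Icc 1 (m+1) with hT
  set e : K := -q^3 * z j with he
  set S : Finset K := (T.image z ∪ T.image (fun i => -q * z i)) ∪ {e} with hS
  set P : K[X] := ∏ i ∈ T, ((X - C (q^2 * z i)) * (X + C (q^3 * z i))) with hP
  have hdisj1 : Disjoint (T.image z) (T.image (fun i => -q * z i)) := by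
    rw [disjoint_left]
    intro a ha hb
    simp only [mem_image] at ha hb
    obtain ⟨i, hi, rfl⟩ := ha
    obtain ⟨b, hb', hba⟩ := hb
    have : z i + q * z b = 0 := by rw [← hba]; ring
    exact hq1 i (hsub i hi) b (hsub b hb') this
  have henotin : e ∉ T.image z ∪ T.image (fun i => -q * z i) := by
    simp only [mem_union, mem_image, not_or, not_exists]
    constructor
    · rintro i ⟨hi, hie⟩
      refine hq3 i (hsub i hi) j hjn ?_
      rw [hie, he]; ring
    · rintro i ⟨hi, hie⟩
      refine hq2 j hjn i (hsub i hi) ?_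
      rw [he] at hie
      have h0 : q * (q^2 * z j - z i) = 0 := by linear_combination hie
      have := (mul_eq_zero.mp h0).resolve_left hq
      rw [sub_eq_zero] at this
      exact this
  have hdisj2 : Disjoint (T.image z ∪ T.image (fun i => -q * z i)) {e} :=
    Finset.disjoint_singleton_right.mpr henotin
  have hTcard : T.card = m + 1 := by rw [hT, Nat.card_Icc]; omega
  have hScard : S.card = 2*m + 3 := by
    rw [hS, card_union_of_disjoint hdisj2, card_union_of_disjoint hdisj1,
      card_image_of_injOn (fun a ha b hb => hzinjOn a ha b hb),
      card_image_of_injOn (fun a ha b hb => hφinjOn a ha b hb), card_singleton, hTcard]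
    omega
  have hfacne : ∀ i : ℕ, ((X - C (q^2 * z i)) * (X + C (q^3 * z i))) ≠ 0 := by
    intro i
    apply mul_ne_zero (X_sub_C_ne_zero _)
    have : (X : K[X]) + C (q^3 * z i) = X - C (-(q^3 * z i)) := by rw [map_neg, sub_neg_eq_add]
    rw [this]
    exact X_sub_C_ne_zero _
  have hPne : P ≠ 0 := prod_ne_zero_iff.mpr fun i _ => hfacne i
  have hPdeg : P.degree < (S.card : WithBot ℕ) := by
    have h1 : P.natDegree = 2*m + 2 := by
      rw [hP, natDegree_prod _ _ (fun i _ => hfacne i)]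
      rw [Finset.sum_congr rfl (g := fun _ => 2) (fun i _ => by
        rw [natDegree_mul (X_sub_C_ne_zero _) (by
          have : (X : K[X]) + C (q^3 * z i) = X - C (-(q^3 * z i)) := by
            rw [map_neg, sub_neg_eq_add]
          rw [this]; exact X_sub_C_ne_zero _), natDegree_X_sub_C, natDegree_X_add_C])]
      rw [sum_const, hTcard, smul_eq_mul]
      omega
    rw [degree_eq_natDegree hPne, h1, hScard]
    exact_mod_cast (by omega : 2*m+2 < 2*m+3)
  have hL := lagrange_eval_aux' S P hPdeg x
  have hPeval : ∀ w : K, P.eval w = ∏ i ∈ T, ((w - q^2 * z i) * (w + q^3 * z i)) := by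
    intro w; rw [hP, eval_prod]; exact prod_congr rfl fun i _ => by simp
  have hPe0 : P.eval e = 0 := by
    rw [hPeval]
    apply prod_eq_zero hj
    rw [he]; ring
  have hn2 : m + 2 ∈ Icc 1 (m + 2) := by rw [mem_Icc]; omega
  have hLsplit : P.eval x =
      (∑ k ∈ T, P.eval (z k) * ∏ w ∈ S.erase (z k), (x - w) / (z k - w))
      + ∑ k ∈ T, P.eval (-q * z k) * ∏ w ∈ S.erase (-q * z k), (x - w) / (-q * z k - w) := by
    rw [hL]
    rw [Finset.sum_congr hS (fun _ _ => rfl)]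
    rw [sum_union hdisj2, sum_union hdisj1, sum_singleton, hPe0, zero_mul, add_zero,
      sum_image (fun a ha b hb => hzinjOn a ha b hb),
      sum_image (fun a ha b hb => hφinjOn a ha b hb)]
  have hSz : ∀ k ∈ T, S.erase (z k)
      = ((T.erase k).image z ∪ T.image (fun i => -q * z i)) ∪ {e} := by
    intro k hk
    have h1 : (T.image z).erase (z k) = (T.erase k).image z := image_erase_injOn' hzinjOn hk
    have h2 : (T.image (fun i => -q * z i)).erase (z k) = T.image (fun i => -q * z i) :=
      erase_eq_of_notMem (disjoint_left.mp hdisj1 (mem_image_of_mem z hk))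
    have h3 : ({e} : Finset K).erase (z k) = {e} := by
      apply erase_eq_of_notMem
      rw [mem_singleton]
      intro h
      exact hq3 k (hsub k hk) j hjn (by rw [h, he]; ring)
    rw [hS, erase_union_distrib, erase_union_distrib, h1, h2, h3]
  have hSφ : ∀ k ∈ T, S.erase (-q * z k)
      = (T.image z ∪ (T.erase k).image (fun i => -q * z i)) ∪ {e} := by
    intro k hk
    have h1 : (T.image (fun i => -q * z i)).erase (-q * z k)
        = (T.erase k).image (fun i => -q * z i) := image_erase_injOn' hφinjOn hk
    have h2 : (T.image z).erase (-q * z k) = T.image z :=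
      erase_eq_of_notMem (disjoint_right.mp hdisj1 (mem_image_of_mem _ hk))
    have h3 : ({e} : Finset K).erase (-q * z k) = {e} := by
      apply erase_eq_of_notMem
      rw [mem_singleton, he]
      intro h
      have h0 : q * (q^2 * z j - z k) = 0 := by linear_combination h
      have h4 := (mul_eq_zero.mp h0).resolve_left hq
      rw [sub_eq_zero] at h4
      exact hq2 j hjn k (hsub k hk) h4
    rw [hS, erase_union_distrib, erase_union_distrib, h1, h2, h3]
  have hxj : x + q^3 * z j ≠ 0 := hq3 (m+2) hn2 j hjn
  have hmu : ∀ k ∈ T,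
      muKS (m+2) q z k x * (1 / (1 + (q ^ 3)⁻¹ * z k / z j)) * (P.eval x * (x + q^3 * z j))
      = q^3 * z j * (P.eval (z k) * ∏ w ∈ S.erase (z k), (x - w) / (z k - w)) := by
    intro k hk
    have hkn := hsub k hk
    have hzk := hz0 k hk
    have hA2 : ∀ i ∈ T.erase k, z k - z i ≠ 0 := fun i hi =>
      sub_ne_zero_of_ne (hdist k hk i (mem_of_mem_erase hi)
        (fun h => (mem_erase.mp hi).1 h.symm))
    have hB4 : ∀ i ∈ T, z k + q * z i ≠ 0 := fun i hi => hq1 k hkn i (hsub i hi)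
    have hB5 : ∀ i ∈ T, x - q^2 * z i ≠ 0 := fun i hi =>
      sub_ne_zero_of_ne (Ne.symm (hq2 i (hsub i hi) (m+2) hn2))
    have hB6 : ∀ i ∈ T, x + q^3 * z i ≠ 0 := fun i hi => hq3 (m+2) hn2 i (hsub i hi)
    have hkj : z k + q^3 * z j ≠ 0 := hq3 k hkn j hjn
    have hPA2 : (∏ i ∈ T.erase k, (z k - z i)) ≠ 0 := prod_ne_zero_iff.mpr hA2
    have hPB4 : (∏ i ∈ T, (z k + q * z i)) ≠ 0 := prod_ne_zero_iff.mpr hB4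
    have hPB5 : (∏ i ∈ T, (x - q^2 * z i)) ≠ 0 := prod_ne_zero_iff.mpr hB5
    have hPB6 : (∏ i ∈ T, (x + q^3 * z i)) ≠ 0 := prod_ne_zero_iff.mpr hB6
    have h1 : (1:K) / (1 + (q ^ 3)⁻¹ * z k / z j) = q^3 * z j / (z k + q^3 * z j) := by
      rw [show 1 + (q ^ 3)⁻¹ * z k / z j = (z k + q^3 * z j) / (q^3 * z j) by
        field_simp; ring, one_div_div]
    rw [h1, hSz k hk]
    rw [prod_union (hdisj2.mono_left
        (union_subset_union (image_subset_image (erase_subset _ _)) Subset.rfl)),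
      prod_union (hdisj1.mono_left (image_subset_image (erase_subset _ _))),
      prod_singleton,
      prod_image (fun a ha b hb => hzinjOn a (mem_of_mem_erase ha) b (mem_of_mem_erase hb)),
      prod_image (fun a ha b hb => hφinjOn a ha b hb)]
    rw [show (∏ i ∈ T, ((x - -q * z i) / (z k - -q * z i)))
        = ∏ i ∈ T, ((x + q * z i) / (z k + q * z i)) from
      prod_congr rfl fun i _ => by congr 1 <;> ring]
    rw [show ((x - e) / (z k - e)) = (x + q^3 * z j) / (z k + q^3 * z j) from by
      rw [he]; congr 1 <;> ring]
    simp only [hPeval, muKS]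
    simp only [show m + 2 - 1 = m + 1 from rfl, ← hT]
    simp only [prod_div_distrib, prod_mul_distrib]
    field_simp
  have hnu : ∀ k ∈ T,
      nuKS (m+2) q z k x * (1 / (1 - (q ^ 2)⁻¹ * z k / z j)) * (P.eval x * (x + q^3 * z j))
      = q^3 * z j * (P.eval (-q * z k) * ∏ w ∈ S.erase (-q * z k), (x - w) / (-q * z k - w)) := by
    intro k hk
    have hkn := hsub k hk
    have hA2 : ∀ i ∈ T.erase k, z k - z i ≠ 0 := fun i hi =>
      sub_ne_zero_of_ne (hdist k hk i (mem_of_mem_erase hi)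
        (fun h => (mem_erase.mp hi).1 h.symm))
    have hB8 : ∀ i ∈ T, q * z k + z i ≠ 0 := fun i hi => by
      rw [add_comm]; exact hq1 i (hsub i hi) k hkn
    have hB5 : ∀ i ∈ T, x - q^2 * z i ≠ 0 := fun i hi =>
      sub_ne_zero_of_ne (Ne.symm (hq2 i (hsub i hi) (m+2) hn2))
    have hB6 : ∀ i ∈ T, x + q^3 * z i ≠ 0 := fun i hi => hq3 (m+2) hn2 i (hsub i hi)
    have hjk : q^2 * z j - z k ≠ 0 := sub_ne_zero_of_ne (hq2 j hjn k hkn)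
    have hPA2 : (∏ i ∈ T.erase k, (z k - z i)) ≠ 0 := prod_ne_zero_iff.mpr hA2
    have hPB8 : (∏ i ∈ T, (q * z k + z i)) ≠ 0 := prod_ne_zero_iff.mpr hB8
    have hPB5 : (∏ i ∈ T, (x - q^2 * z i)) ≠ 0 := prod_ne_zero_iff.mpr hB5
    have hPB6 : (∏ i ∈ T, (x + q^3 * z i)) ≠ 0 := prod_ne_zero_iff.mpr hB6
    have hkerase : (T.erase k).card = m := by
      rw [card_erase_of_mem hk, hTcard]
      omega
    have hne1 : ((-1:K))^(m+1) ≠ 0 := pow_ne_zero _ (by norm_num)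
    have hneq : ((-q:K))^m ≠ 0 := pow_ne_zero _ (neg_ne_zero.mpr hq)
    have h1 : (1:K) / (1 - (q ^ 2)⁻¹ * z k / z j) = q^2 * z j / (q^2 * z j - z k) := by
      rw [show 1 - (q ^ 2)⁻¹ * z k / z j = (q^2 * z j - z k) / (q^2 * z j) by
        field_simp, one_div_div]
    rw [h1, hSφ k hk]
    rw [prod_union (hdisj2.mono_left
        (union_subset_union Subset.rfl (image_subset_image (erase_subset _ _)))),
      prod_union (hdisj1.mono_right (image_subset_image (erase_subset _ _))),
      prod_singleton,
      prod_image (fun a ha b hb => hzinjOn a ha b hb),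
      prod_image (fun a ha b hb => hφinjOn a (mem_of_mem_erase ha) b (mem_of_mem_erase hb))]
    rw [show (∏ i ∈ T, ((x - z i) / (-q * z k - z i)))
        = ∏ i ∈ T, ((x - z i) / (-1 * (q * z k + z i))) from
      prod_congr rfl fun i _ => by congr 1 <;> ring]
    rw [show (∏ i ∈ T.erase k, ((x - -q * z i) / (-q * z k - -q * z i)))
        = ∏ i ∈ T.erase k, ((x + q * z i) / (-q * (z k - z i))) from
      prod_congr rfl fun i _ => by congr 1 <;> ring]
    rw [show ((x - e) / (-q * z k - e)) = (x + q^3 * z j) / (q * (q^2 * z j - z k)) from by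
      rw [he]; congr 1 <;> ring]
    rw [show P.eval (-q * z k) = ∏ i ∈ T, (q^2 * ((z k + q * z i) * (z k - q^2 * z i))) from by
      rw [hPeval]; exact prod_congr rfl fun i _ => by ring]
    simp only [hPeval, nuKS]
    simp only [show m + 2 - 1 = m + 1 from rfl, ← hT]
    simp only [prod_div_distrib, prod_mul_distrib, prod_const, hTcard, hkerase]
    have hsgn : ((-1:K))^(m+1) * (-q)^m = -(q^m) := by
      rw [neg_pow q m, ← mul_assoc, ← pow_add]
      have hmm : m + 1 + m = 2*m + 1 := by omega
      rw [hmm, pow_succ, mul_comm 2 m, pow_mul, ← pow_mul, mul_comm m 2, pow_mul]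
      norm_num
    field_simp
    rw [mul_assoc _ ((-1:K)^(m+1)), hsgn]
    ring
  have hrhs : (1:K) / (1 + (q ^ 3)⁻¹ * x / z j) = q^3 * z j / (x + q^3 * z j) := by
    rw [show 1 + (q ^ 3)⁻¹ * x / z j = (x + q^3 * z j) / (q^3 * z j) by
      field_simp; ring, one_div_div]
  have hD : P.eval x * (x + q^3 * z j) ≠ 0 := by
    refine mul_ne_zero ?_ hxj
    rw [hPeval]
    exact prod_ne_zero_iff.mpr fun i hi => mul_ne_zero
      (sub_ne_zero_of_ne (Ne.symm (hq2 i (hsub i hi) (m+2) hn2)))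
      (hq3 (m+2) hn2 i (hsub i hi))
  apply mul_right_cancel₀ hD
  rw [add_mul, sum_mul, sum_mul, Finset.sum_congr rfl hmu, Finset.sum_congr rfl hnu,
    ← mul_sum, ← mul_sum, ← mul_add, ← hLsplit, hrhs]
  field_simp
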